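/- For t > 0 and λ ≥ 0, (√(1+λ) − √λ)^{2t} = (Γ(t+1/2)Γ(t+1))/(Γ(1/2)Γ(2t+1)) · λ^{−t} · F(t, t+1/2, 2t+1; −1/λ) for λ > 0; equivalently, if γ_t is Gamma(t) and β_{1/2,1/2+t} is Beta(1/2, 1/2+t), independent, then E[exp(−λ γ_t / β_{1/2,1/2+t})] = (√(1+λ) − √λ)^{2t}. -/

import Mathlib

open MeasureTheory Set Real

/-- Euler integral representation of the Gauss hypergeometric function. -/
noncomputable def gaussF (α δ γ z : ℝ) : ℝ :=
  (Real.Gamma γ / (Real.Gamma δ * Real.Gamma (γ - δ))) *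
    ∫ t in Ioo (0:ℝ) 1, t ^ (δ - 1) * (1 - t) ^ (γ - δ - 1) * (1 - t * z) ^ (-α)

lemma complex_eq_real_beta {a b : ℝ} (x : ℝ) (hx : x ∈ Ioo (0:ℝ) 1) :
    ((x:ℂ) ^ ((a:ℂ) - 1) * (1 - (x:ℂ)) ^ ((b:ℂ) - 1))
      = ((x ^ (a - 1) * (1 - x) ^ (b - 1) : ℝ) : ℂ) := by
  rw [Complex.ofReal_mul, Complex.ofReal_cpow hx.1.le, Complex.ofReal_cpow (by linarith [hx.2])]
  push_cast
  ring_nf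

lemma betaIntegrable {a b : ℝ} (ha : 0 < a) (hb : 0 < b) :
    IntegrableOn (fun u : ℝ => u ^ (a - 1) * (1 - u) ^ (b - 1)) (Ioo (0:ℝ) 1) := by
  have h := (Complex.betaIntegral_convergent (u := (a:ℂ)) (v := (b:ℂ)) (by simpa) (by simpa)).1
  have h' : IntegrableOn (fun x : ℝ => (x:ℂ) ^ ((a:ℂ)-1) * (1 - (x:ℂ)) ^ ((b:ℂ)-1))
      (Ioo (0:ℝ) 1) := h.mono_set Ioo_subset_Ioc_self
  have h2 : IntegrableOn (fun x : ℝ =>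
      ((x ^ (a - 1) * (1 - x) ^ (b - 1) : ℝ) : ℂ)) (Ioo (0:ℝ) 1) :=
    h'.congr_fun (fun x hx => complex_eq_real_beta x hx) measurableSet_Ioo
  simpa [IntegrableOn] using h2.re

lemma betaIoo {a b : ℝ} (ha : 0 < a) (hb : 0 < b) :
    ∫ u in Ioo (0:ℝ) 1, u ^ (a - 1) * (1 - u) ^ (b - 1)
      = Real.Gamma a * Real.Gamma b / Real.Gamma (a + b) := by
  have h := Complex.Gamma_mul_Gamma_eq_betaIntegral
    (s := (a:ℂ)) (t := (b:ℂ)) (by simpa) (by simpa)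
  rw [Complex.betaIntegral] at h
  have hI : (∫ x : ℝ in (0:ℝ)..1, (x:ℂ) ^ ((a:ℂ) - 1) * (1 - (x:ℂ)) ^ ((b:ℂ) - 1))
      = ((∫ u in Ioo (0:ℝ) 1, u ^ (a - 1) * (1 - u) ^ (b - 1) : ℝ) : ℂ) := by
    rw [intervalIntegral.integral_of_le zero_le_one, MeasureTheory.integral_Ioc_eq_integral_Ioo,
      setIntegral_congr_fun measurableSet_Ioo (fun x hx => complex_eq_real_beta x hx)]
    exact integral_ofReal
  rw [hI, show ((a:ℂ) + b) = ((a+b:ℝ):ℂ) by push_cast; ring, Complex.Gamma_ofReal,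
    Complex.Gamma_ofReal, Complex.Gamma_ofReal, ← Complex.ofReal_mul, ← Complex.ofReal_mul] at h
  have h2 := Complex.ofReal_injective h
  have hpos := Real.Gamma_pos_of_pos (show (0:ℝ) < a + b by linarith)
  field_simp
  linarith [h2]

noncomputable def Ifun (t l : ℝ) : ℝ :=
  ∫ u in Ioo (0:ℝ) 1, u ^ (t - 1/2) * (1 - u) ^ (t - 1/2) * (u + l) ^ (-t)

noncomputable def Jfun (t l : ℝ) : ℝ :=
  ∫ u in Ioo (0:ℝ) 1, u ^ (t - 1/2) * (1 - u) ^ (t - 1/2) * (u + l) ^ (-t - 1)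

lemma Ifun_integrable {t l : ℝ} (ht : 0 < t) (hl : 0 ≤ l) :
    IntegrableOn (fun u : ℝ => u ^ (t - 1/2) * (1 - u) ^ (t - 1/2) * (u + l) ^ (-t))
      (Ioo (0:ℝ) 1) := by
  have hbeta : IntegrableOn (fun u : ℝ => u ^ ((1:ℝ)/2 - 1) * (1 - u) ^ ((t + 1/2) - 1))
      (Ioo (0:ℝ) 1) := betaIntegrable (by norm_num) (by linarith)
  refine hbeta.mono' ?_ ?_
  · apply Measurable.aestronglyMeasurable
    fun_prop
  · filter_upwards [self_mem_ae_restrict measurableSet_Ioo] with u hu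
    have h0 : (0:ℝ) < u := hu.1
    have h1 : (0:ℝ) < 1 - u := by linarith [hu.2]
    rw [Real.norm_eq_abs, abs_of_nonneg (by positivity)]
    have h2 : (u + l) ^ (-t) ≤ u ^ (-t) :=
      Real.rpow_le_rpow_of_nonpos h0 (by linarith) (by linarith)
    calc u ^ (t - 1/2) * (1 - u) ^ (t - 1/2) * (u + l) ^ (-t)
        ≤ u ^ (t - 1/2) * (1 - u) ^ (t - 1/2) * u ^ (-t) := by
          apply mul_le_mul_of_nonneg_left h2 (by positivity)
      _ = u ^ ((1:ℝ)/2 - 1) * (1 - u) ^ ((t + 1/2) - 1) := by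
          rw [mul_right_comm, ← Real.rpow_add h0]
          ring_nf

lemma rpow_as_exp {x : ℝ} (hx : 0 < x) (y : ℝ) : x ^ y = Real.exp (y * Real.log x) :=
  by rw [Real.rpow_def_of_pos hx, mul_comm]

lemma mobius_sub {t l : ℝ} (ht : 0 < t) (hl : 0 < l) :
    (∫ u in Ioo (0:ℝ) 1, u ^ (t - 1/2) * (1 - u) ^ (t - 1/2) * (u + l) ^ (-t))
      = (l*(1+l)) ^ ((1:ℝ)/2) *
        ∫ w in Ioo (0:ℝ) 1, w ^ (t - 1/2) * (1 - w) ^ (t - 1/2) * (1 + l - w) ^ (-t-1) := by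
  set φ : ℝ → ℝ := fun w => l * w / (1 + l - w) with hφ
  set φ' : ℝ → ℝ := fun w => l * (1 + l) / (1 + l - w) ^ 2 with hφ'
  have hD : ∀ w : ℝ, w ∈ Ioo (0:ℝ) 1 → 0 < 1 + l - w := fun w hw => by
    have := hw.2; linarith
  have hderiv : ∀ w ∈ Ioo (0:ℝ) 1, HasDerivWithinAt φ (φ' w) (Ioo (0:ℝ) 1) w := by
    intro w hw
    have h1 : HasDerivAt (fun w : ℝ => l * w) l w := by
      simpa using (hasDerivAt_id w).const_mul l
    have h2 : HasDerivAt (fun w : ℝ => 1 + l - w) (-1) w := by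
      simpa using ((hasDerivAt_id w).const_sub (1 + l))
    have h3 := h1.div h2 (hD w hw).ne'
    have : (l * (1 + l - w) - l * w * (-1)) / (1 + l - w) ^ 2 = φ' w := by
      field_simp [hφ']
      ring
    rw [this] at h3
    exact h3.hasDerivWithinAt
  have hmono : StrictMonoOn φ (Ioo (0:ℝ) 1) := by
    intro a ha b hb hab
    have h1 := hD a ha; have h2 := hD b hb
    rw [hφ]; simp only
    rw [div_lt_div_iff₀ h1 h2]
    nlinarith [ha.1, hb.1, mul_pos hl (sub_pos.mpr hab)]
  have himg : φ '' (Ioo (0:ℝ) 1) = Ioo (0:ℝ) 1 := by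
    ext u
    constructor
    · rintro ⟨w, hw, rfl⟩
      have h1 := hD w hw
      constructor
      · exact div_pos (by nlinarith [hw.1]) h1
      · rw [div_lt_one h1]; nlinarith [hw.2]
    · intro hu
      have h1 : (0:ℝ) < u + l := by linarith [hu.1]
      refine ⟨(1+l)*u/(u+l), ?_, ?_⟩
      · constructor
        · have hnum : (0:ℝ) < (1+l)*u := by have := hu.1; positivity
          positivity
        · rw [div_lt_one h1]; nlinarith [hu.2]
      · have h2 : 1 + l - (1+l)*u/(u+l) = (1+l)*l/(u+l) := by field_simp; ring
        rw [hφ]; simp only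
        rw [h2, div_eq_iff (by positivity : ((1+l)*l/(u+l)) ≠ 0)]
        field_simp
  have key := integral_image_eq_integral_abs_deriv_smul measurableSet_Ioo hderiv
    (hmono.injOn) (fun u => u ^ (t - 1/2) * (1 - u) ^ (t - 1/2) * (u + l) ^ (-t))
  rw [himg] at key
  rw [key, ← integral_const_mul]
  apply setIntegral_congr_fun measurableSet_Ioo
  intro w hw
  simp only [smul_eq_mul]
  have h0 : (0:ℝ) < w := hw.1
  have h1 : (0:ℝ) < 1 - w := by linarith [hw.2]
  have hDw := hD w hw
  have hlp : (0:ℝ) < 1 + l := by linarith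
  have e1 : φ w = l * w / (1 + l - w) := rfl
  have e2 : 1 - φ w = (1+l) * (1-w) / (1 + l - w) := by
    rw [e1]; field_simp; ring
  have e3 : φ w + l = l * (1+l) / (1 + l - w) := by
    rw [e1]; field_simp; ring
  have e4 : |φ' w| = l * (1+l) / (1 + l - w) ^ 2 := by
    rw [hφ']; simp only
    rw [abs_of_pos (by positivity)]
  rw [e4, e1, e2, e3]
  -- now convert to exp/log form
  have f1 : (l * w / (1 + l - w)) ^ (t - 1/2)
      = Real.exp ((t - 1/2) * (Real.log l + Real.log w - Real.log (1+l-w))) := by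
    rw [rpow_as_exp (by positivity), Real.log_div (by positivity) hDw.ne',
      Real.log_mul hl.ne' h0.ne']
  have f2 : ((1+l) * (1-w) / (1 + l - w)) ^ (t - 1/2)
      = Real.exp ((t - 1/2) * (Real.log (1+l) + Real.log (1-w) - Real.log (1+l-w))) := by
    rw [rpow_as_exp (by positivity), Real.log_div (by positivity) hDw.ne',
      Real.log_mul hlp.ne' h1.ne']
  have f3 : (l * (1+l) / (1 + l - w)) ^ (-t)
      = Real.exp ((-t) * (Real.log l + Real.log (1+l) - Real.log (1+l-w))) := by
    rw [rpow_as_exp (by positivity), Real.log_div (by positivity) hDw.ne',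
      Real.log_mul hl.ne' hlp.ne']
  have f4 : l * (1+l) / (1 + l - w) ^ 2
      = Real.exp (Real.log l + Real.log (1+l) - 2 * Real.log (1+l-w)) := by
    rw [← Real.exp_log (show (0:ℝ) < l * (1+l) / (1 + l - w) ^ 2 by positivity),
      Real.log_div (by positivity) (by positivity), Real.log_mul hl.ne' hlp.ne',
      Real.log_pow]
    norm_num
  have f5 : (l*(1+l)) ^ ((1:ℝ)/2)
      = Real.exp ((1/2) * (Real.log l + Real.log (1+l))) := by
    rw [rpow_as_exp (by positivity), Real.log_mul hl.ne' hlp.ne']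
  have f6 : w ^ (t - 1/2) = Real.exp ((t - 1/2) * Real.log w) := rpow_as_exp h0 _
  have f7 : (1-w) ^ (t - 1/2) = Real.exp ((t - 1/2) * Real.log (1-w)) := rpow_as_exp h1 _
  have f8 : (1+l-w) ^ (-t-1) = Real.exp ((-t-1) * Real.log (1+l-w)) := rpow_as_exp hDw _
  rw [f1, f2, f3, f4, f5, f6, f7, f8, ← Real.exp_add, ← Real.exp_add, ← Real.exp_add,
    ← Real.exp_add, ← Real.exp_add, ← Real.exp_add, Real.exp_eq_exp]
  ring

lemma reflect_Ioo (g : ℝ → ℝ) :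
    ∫ w in Ioo (0:ℝ) 1, g (1 - w) = ∫ w in Ioo (0:ℝ) 1, g w := by
  have hderiv : ∀ w ∈ Ioo (0:ℝ) 1,
      HasDerivWithinAt (fun w : ℝ => 1 - w) (-1) (Ioo (0:ℝ) 1) w := fun w _ =>
    ((hasDerivAt_id w).const_sub 1).hasDerivWithinAt
  have hinj : InjOn (fun w : ℝ => 1 - w) (Ioo (0:ℝ) 1) := fun a _ b _ h => by
    simp only at h; linarith
  have himg : (fun w : ℝ => 1 - w) '' Ioo (0:ℝ) 1 = Ioo (0:ℝ) 1 := by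
    ext u
    constructor
    · rintro ⟨w, hw, rfl⟩
      simp only [mem_Ioo] at *
      constructor <;> [linarith [hw.2]; linarith [hw.1]]
    · intro hu
      exact ⟨1 - u, by simp only [mem_Ioo] at *; constructor <;> linarith, by ring⟩
  have key := integral_image_eq_integral_abs_deriv_smul measurableSet_Ioo hderiv hinj g
  rw [himg] at key
  rw [key]
  simp

lemma Ifun_hasDeriv_aux {t l : ℝ} (ht : 0 < t) (hl : 0 < l)
    (hbeta : IntegrableOn (fun u : ℝ => u ^ (t - 1/2) * (1 - u) ^ (t - 1/2)) (Ioo (0:ℝ) 1))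
    (hint : IntegrableOn (fun u : ℝ => u ^ (t - 1/2) * (1 - u) ^ (t - 1/2) * (u + l) ^ (-t))
      (Ioo (0:ℝ) 1)) :
    HasDerivAt (fun x => ∫ u in Ioo (0:ℝ) 1, u ^ (t - 1/2) * (1 - u) ^ (t - 1/2) * (u + x) ^ (-t))
      (∫ u in Ioo (0:ℝ) 1,
        u ^ (t - 1/2) * (1 - u) ^ (t - 1/2) * (-t * (u + l) ^ (-t - 1))) l := by
  have hmeas : ∀ x : ℝ, AEStronglyMeasurable
      (fun u : ℝ => u ^ (t - 1/2) * (1 - u) ^ (t - 1/2) * (u + x) ^ (-t))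
      (volume.restrict (Ioo (0:ℝ) 1)) := by
    intro x
    apply Measurable.aestronglyMeasurable
    fun_prop
  have hmeas' : AEStronglyMeasurable
      (fun u : ℝ => u ^ (t - 1/2) * (1 - u) ^ (t - 1/2) * (-t * (u + l) ^ (-t - 1)))
      (volume.restrict (Ioo (0:ℝ) 1)) := by
    apply Measurable.aestronglyMeasurable
    fun_prop
  have h := hasDerivAt_integral_of_dominated_loc_of_deriv_le (μ := volume.restrict (Ioo (0:ℝ) 1))
    (F := fun x u => u ^ (t - 1/2) * (1 - u) ^ (t - 1/2) * (u + x) ^ (-t))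
    (F' := fun x u => u ^ (t - 1/2) * (1 - u) ^ (t - 1/2) * (-t * (u + x) ^ (-t - 1)))
    (x₀ := l)
    (bound := fun u => u ^ (t - 1/2) * (1 - u) ^ (t - 1/2) * (t * (l/2) ^ (-t - 1)))
    (Metric.ball_mem_nhds l (half_pos hl)) (Filter.Eventually.of_forall hmeas) hint hmeas' ?_ ?_ ?_
  · exact h.2
  · filter_upwards [self_mem_ae_restrict measurableSet_Ioo] with u hu x hx
    have h0 : (0:ℝ) < u := hu.1
    have h1 : (0:ℝ) < 1 - u := by linarith [hu.2]
    have hx1 : l/2 < x := by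
      have := abs_lt.mp (by rwa [Metric.mem_ball, Real.dist_eq] at hx)
      linarith [this.1]
    have hux : l/2 < u + x := by linarith
    have hux0 : (0:ℝ) < u + x := lt_trans (by positivity) hux
    rw [Real.norm_eq_abs, abs_mul, abs_mul, abs_mul, abs_neg,
      abs_of_nonneg (Real.rpow_nonneg h0.le _), abs_of_nonneg (Real.rpow_nonneg h1.le _),
      abs_of_nonneg ht.le, abs_of_nonneg (Real.rpow_nonneg hux0.le _)]
    have hle : (u + x) ^ (-t - 1) ≤ (l/2) ^ (-t - 1) :=
      Real.rpow_le_rpow_of_nonpos (by positivity) hux.le (by linarith)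
    gcongr
    all_goals first
      | exact Real.rpow_nonneg h1.le _
      | exact Real.rpow_nonneg h0.le _
  · exact hbeta.mul_const _
  · filter_upwards [self_mem_ae_restrict measurableSet_Ioo] with u hu x hx
    have h0 : (0:ℝ) < u := hu.1
    have hx1 : l/2 < x := by
      have := abs_lt.mp (by rwa [Metric.mem_ball, Real.dist_eq] at hx)
      linarith [this.1]
    have hux : (0:ℝ) < u + x := by linarith
    have hd : HasDerivAt (fun x : ℝ => (u + x) ^ (-t))
        (-t * (u + x) ^ (-t - 1)) x := by
      have h1 : HasDerivAt (fun x : ℝ => u + x) 1 x := by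
        simpa using (hasDerivAt_id x).const_add u
      have h2 := (Real.hasDerivAt_rpow_const (x := u + x) (p := -t) (Or.inl hux.ne')).comp x h1
      simpa [Function.comp_def, mul_comm] using h2
    simpa [mul_comm, mul_left_comm, mul_assoc] using (hd.const_mul (u ^ (t - 1/2) * (1 - u) ^ (t - 1/2)))


lemma hbeta_pp {t : ℝ} (ht : 0 < t) :
    IntegrableOn (fun u : ℝ => u ^ (t - 1/2) * (1 - u) ^ (t - 1/2)) (Ioo (0:ℝ) 1) := by
  have h := betaIntegrable (a := t + 1/2) (b := t + 1/2) (by linarith) (by linarith)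
  have e : t + 1/2 - 1 = t - 1/2 := by ring
  rwa [e] at h

lemma Ifun_tendsto_zero {t : ℝ} (ht : 0 < t) :
    Filter.Tendsto (fun l => Ifun t l) (nhdsWithin 0 (Ioi (0:ℝ))) (nhds (Ifun t 0)) := by
  unfold Ifun
  apply MeasureTheory.tendsto_integral_filter_of_dominated_convergence
    (bound := fun u : ℝ => u ^ ((1:ℝ)/2 - 1) * (1 - u) ^ ((t + 1/2) - 1))
  · apply Filter.Eventually.of_forall
    intro x
    apply Measurable.aestronglyMeasurable
    fun_prop
  · filter_upwards [self_mem_nhdsWithin] with l (hl : l ∈ Ioi (0:ℝ))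
    filter_upwards [self_mem_ae_restrict measurableSet_Ioo] with u hu
    have h0 : (0:ℝ) < u := hu.1
    have h1 : (0:ℝ) < 1 - u := by linarith [hu.2]
    have hl0 : (0:ℝ) < l := hl
    rw [Real.norm_eq_abs, abs_of_nonneg (by positivity)]
    have h2 : (u + l) ^ (-t) ≤ u ^ (-t) :=
      Real.rpow_le_rpow_of_nonpos h0 (by linarith) (by linarith)
    calc u ^ (t - 1/2) * (1 - u) ^ (t - 1/2) * (u + l) ^ (-t)
        ≤ u ^ (t - 1/2) * (1 - u) ^ (t - 1/2) * u ^ (-t) :=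
          mul_le_mul_of_nonneg_left h2 (by positivity)
      _ = u ^ ((1:ℝ)/2 - 1) * (1 - u) ^ ((t + 1/2) - 1) := by
          rw [mul_right_comm, ← Real.rpow_add h0]
          ring_nf
  · exact betaIntegrable (by norm_num) (by linarith)
  · filter_upwards [self_mem_ae_restrict measurableSet_Ioo] with u hu
    have h0 : (0:ℝ) < u := hu.1
    apply Filter.Tendsto.const_mul
    have hc : ContinuousAt (fun l : ℝ => (u + l) ^ (-t)) 0 := by
      apply ContinuousAt.rpow_const
      · exact (continuous_const.add continuous_id).continuousAt
      · left; simpa using h0.ne'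
    exact hc.tendsto.mono_left nhdsWithin_le_nhds

lemma sqrt_factor_tendsto {t : ℝ} :
    Filter.Tendsto (fun l : ℝ => (Real.sqrt (1 + l) + Real.sqrt l) ^ (2*t))
      (nhdsWithin 0 (Ioi (0:ℝ))) (nhds 1) := by
  have hc : ContinuousAt (fun l : ℝ => (Real.sqrt (1 + l) + Real.sqrt l) ^ (2*t)) 0 := by
    apply ContinuousAt.rpow_const
    · exact ((Real.continuous_sqrt.comp (continuous_const.add continuous_id)).add
        Real.continuous_sqrt).continuousAt
    · left; norm_num
  have h := hc.tendsto.mono_left (nhdsWithin_le_nhds (s := Ioi (0:ℝ)))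
  simpa using h



lemma Ifun_hasDeriv {t l : ℝ} (ht : 0 < t) (hl : 0 < l) :
    HasDerivAt (fun x => ∫ u in Ioo (0:ℝ) 1, u ^ (t - 1/2) * (1 - u) ^ (t - 1/2) * (u + x) ^ (-t))
      (∫ u in Ioo (0:ℝ) 1,
        u ^ (t - 1/2) * (1 - u) ^ (t - 1/2) * (-t * (u + l) ^ (-t - 1))) l :=
  Ifun_hasDeriv_aux ht hl (hbeta_pp ht) (Ifun_integrable ht hl.le)

lemma Ifun_eq_SJ {t l : ℝ} (ht : 0 < t) (hl : 0 < l) :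
    Ifun t l = (l*(1+l)) ^ ((1:ℝ)/2) * Jfun t l := by
  rw [Ifun, mobius_sub ht hl, Jfun]
  congr 1
  have hrefl := reflect_Ioo (fun u => u ^ (t - 1/2) * (1 - u) ^ (t - 1/2) * (u + l) ^ (-t - 1))
  rw [← hrefl]
  apply setIntegral_congr_fun measurableSet_Ioo
  intro w hw
  simp only
  have e1 : 1 - (1 - w) = w := by ring
  have e2 : 1 - w + l = 1 + l - w := by ring
  rw [e1, e2]
  ring

lemma Ifun_deriv_J {t l : ℝ} (ht : 0 < t) (hl : 0 < l) :
    HasDerivAt (Ifun t) (-t * Jfun t l) l := by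
  have h := Ifun_hasDeriv ht hl
  have e : (∫ u in Ioo (0:ℝ) 1,
      u ^ (t - 1/2) * (1 - u) ^ (t - 1/2) * (-t * (u + l) ^ (-t - 1)))
      = -t * Jfun t l := by
    rw [Jfun, ← integral_const_mul]
    apply setIntegral_congr_fun measurableSet_Ioo
    intro u hu
    ring
  rw [e] at h
  exact h

lemma H_hasDeriv {t l : ℝ} (ht : 0 < t) (hl : 0 < l) :
    HasDerivAt (fun x => (Real.sqrt (1+x) + Real.sqrt x) ^ (2*t) * Ifun t x) 0 l := by
  have hl1 : (0:ℝ) < 1 + l := by linarith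
  have ha : (0:ℝ) < Real.sqrt (1+l) := Real.sqrt_pos.mpr hl1
  have hb : (0:ℝ) < Real.sqrt l := Real.sqrt_pos.mpr hl
  have hs : (0:ℝ) < Real.sqrt (1+l) + Real.sqrt l := by linarith
  have h1 : HasDerivAt (fun x : ℝ => Real.sqrt (1+x)) (1/(2*Real.sqrt (1+l))) l := by
    have hinner : HasDerivAt (fun x : ℝ => 1 + x) 1 l := by
      simpa using (hasDerivAt_id l).const_add (1:ℝ)
    have := (Real.hasDerivAt_sqrt hl1.ne').comp l hinner
    simpa [Function.comp_def] using this
  have h2 : HasDerivAt Real.sqrt (1/(2*Real.sqrt l)) l := Real.hasDerivAt_sqrt hl.ne'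
  have h3 : HasDerivAt (fun x : ℝ => Real.sqrt (1+x) + Real.sqrt x)
      (1/(2*Real.sqrt (1+l)) + 1/(2*Real.sqrt l)) l := h1.add h2
  have h4 : HasDerivAt (fun x : ℝ => (Real.sqrt (1+x) + Real.sqrt x) ^ (2*t))
      ((2*t) * (Real.sqrt (1+l) + Real.sqrt l) ^ (2*t-1)
        * (1/(2*Real.sqrt (1+l)) + 1/(2*Real.sqrt l))) l := by
    have := (Real.hasDerivAt_rpow_const (x := Real.sqrt (1+l) + Real.sqrt l)
      (p := 2*t) (Or.inl hs.ne')).comp l h3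
    simpa [Function.comp_def, mul_comm, mul_assoc] using this
  have h5 := h4.mul (Ifun_deriv_J ht hl)
  have hS : (l*(1+l)) ^ ((1:ℝ)/2) = Real.sqrt l * Real.sqrt (1+l) := by
    rw [← Real.sqrt_eq_rpow, Real.sqrt_mul hl.le]
  have hA : (Real.sqrt (1+l) + Real.sqrt l) ^ (2*t)
      = (Real.sqrt (1+l) + Real.sqrt l) ^ (2*t-1) * (Real.sqrt (1+l) + Real.sqrt l) := by
    rw [← Real.rpow_add_one hs.ne' (2*t-1)]
    ring_nf
  have hV : (2*t) * (Real.sqrt (1+l) + Real.sqrt l) ^ (2*t-1)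
        * (1/(2*Real.sqrt (1+l)) + 1/(2*Real.sqrt l)) * Ifun t l
      + (Real.sqrt (1+l) + Real.sqrt l) ^ (2*t) * (-t * Jfun t l) = 0 := by
    rw [Ifun_eq_SJ ht hl, hS, hA]
    field_simp
    ring
  exact hV ▸ h5

lemma Ifun_zero {t : ℝ} (ht : 0 < t) :
    Ifun t 0 = Real.Gamma (1/2) * Real.Gamma (t + 1/2) / Real.Gamma (t + 1) := by
  have h : Ifun t 0 = ∫ u in Ioo (0:ℝ) 1, u ^ ((1:ℝ)/2 - 1) * (1 - u) ^ ((t + 1/2) - 1) := by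
    rw [Ifun]
    apply setIntegral_congr_fun measurableSet_Ioo
    intro u hu
    have h0 : (0:ℝ) < u := hu.1
    simp only [add_zero, mul_right_comm]
    rw [← Real.rpow_add h0]
    ring_nf
  rw [h, betaIoo (by norm_num) (by linarith), show (1:ℝ)/2 + (t + 1/2) = t + 1 by ring]

lemma Ifun_key {t : ℝ} (ht : 0 < t) {l : ℝ} (hl : 0 ≤ l) :
    Ifun t l = (Real.sqrt (1+l) - Real.sqrt l) ^ (2*t)
      * (Real.Gamma (1/2) * Real.Gamma (t + 1/2) / Real.Gamma (t + 1)) := by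
  rcases eq_or_lt_of_le hl with rfl | hl'
  · rw [Ifun_zero ht]
    norm_num
  · set H : ℝ → ℝ := fun x => (Real.sqrt (1+x) + Real.sqrt x) ^ (2*t) * Ifun t x with hH
    have hHab : ∀ a b : ℝ, 0 < a → a ≤ b → H a = H b := by
      intro a b ha hab
      have hcont : ContinuousOn H (Icc a b) := by
        intro x hx
        exact (H_hasDeriv ht (lt_of_lt_of_le ha hx.1)).continuousAt.continuousWithinAt
      have hder : ∀ x ∈ Ico a b, HasDerivWithinAt H 0 (Ici x) x := fun x hx =>
        (H_hasDeriv ht (lt_of_lt_of_le ha hx.1)).hasDerivWithinAt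
      exact (constant_of_has_deriv_right_zero hcont hder b (right_mem_Icc.mpr hab)).symm
    have hlim : Filter.Tendsto H (nhdsWithin 0 (Ioi (0:ℝ))) (nhds (1 * Ifun t 0)) :=
      sqrt_factor_tendsto.mul (Ifun_tendsto_zero ht)
    have hev : H =ᶠ[nhdsWithin 0 (Ioi (0:ℝ))] fun _ => H l := by
      filter_upwards [Ioc_mem_nhdsGT_of_mem (Set.left_mem_Ico.mpr hl')] with a ha
      exact hHab a l ha.1 ha.2
    have hlim2 : Filter.Tendsto H (nhdsWithin 0 (Ioi (0:ℝ))) (nhds (H l)) :=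
      Filter.Tendsto.congr' hev.symm tendsto_const_nhds
    have hHl : H l = Ifun t 0 := by
      have := tendsto_nhds_unique hlim2 hlim
      simpa using this
    have hl1 : (0:ℝ) < 1 + l := by linarith
    have ha : (0:ℝ) < Real.sqrt (1+l) := Real.sqrt_pos.mpr hl1
    have hb : (0:ℝ) < Real.sqrt l := Real.sqrt_pos.mpr hl'
    have hs : (0:ℝ) < Real.sqrt (1+l) + Real.sqrt l := by linarith
    have hprod : (Real.sqrt (1+l) - Real.sqrt l) * (Real.sqrt (1+l) + Real.sqrt l) = 1 := by
      have e1 : Real.sqrt (1+l) * Real.sqrt (1+l) = 1 + l := Real.mul_self_sqrt hl1.le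
      have e2 : Real.sqrt l * Real.sqrt l = l := Real.mul_self_sqrt hl
      nlinarith
    have hinv : Real.sqrt (1+l) - Real.sqrt l = (Real.sqrt (1+l) + Real.sqrt l)⁻¹ :=
      eq_inv_of_mul_eq_one_left hprod
    have hrp : (Real.sqrt (1+l) - Real.sqrt l) ^ (2*t)
        = ((Real.sqrt (1+l) + Real.sqrt l) ^ (2*t))⁻¹ := by
      rw [hinv, Real.inv_rpow hs.le]
    have hs2t : (0:ℝ) < (Real.sqrt (1+l) + Real.sqrt l) ^ (2*t) :=
      Real.rpow_pos_of_pos hs _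
    rw [hrp, ← Ifun_zero ht, ← hHl]
    simp only [hH]
    field_simp

lemma part_one (t : ℝ) (ht : 0 < t) (l : ℝ) (hl : 0 < l) :
    (Real.sqrt (1 + l) - Real.sqrt l) ^ (2 * t)
        = (Real.Gamma (t + 1 / 2) * Real.Gamma (t + 1)) /
            (Real.Gamma (1 / 2) * Real.Gamma (2 * t + 1)) * l ^ (-t) *
            gaussF t (t + 1 / 2) (2 * t + 1) (-1 / l) := by
  have hint : (∫ u in Ioo (0:ℝ) 1,
      u ^ (t + 1/2 - 1) * (1 - u) ^ (2*t + 1 - (t + 1/2) - 1) * (1 - u * (-1/l)) ^ (-t))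
      = l ^ t * Ifun t l := by
    rw [Ifun, ← integral_const_mul]
    apply setIntegral_congr_fun measurableSet_Ioo
    intro u hu
    have h0 : (0:ℝ) < u := hu.1
    have hul : (0:ℝ) < u + l := by linarith
    have e1 : t + 1/2 - 1 = t - 1/2 := by ring
    have e2 : 2*t + 1 - (t + 1/2) - 1 = t - 1/2 := by ring
    have e3 : 1 - u * (-1/l) = (u + l)/l := by field_simp; ring
    beta_reduce
    rw [e1, e2, e3, Real.div_rpow hul.le hl.le, Real.rpow_neg hl.le, div_inv_eq_mul]
    ring
  have hG : gaussF t (t + 1/2) (2*t + 1) (-1/l)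
      = Real.Gamma (2*t+1) / (Real.Gamma (t+1/2) * Real.Gamma (t+1/2)) * (l ^ t * Ifun t l) := by
    rw [gaussF, show 2*t + 1 - (t + 1/2) = t + 1/2 by ring] at *
    rw [hint]
  rw [hG, Ifun_key ht hl.le]
  have g1 := Real.Gamma_pos_of_pos (show (0:ℝ) < 1/2 by norm_num)
  have g2 := Real.Gamma_pos_of_pos (show (0:ℝ) < t + 1/2 by linarith)
  have g3 := Real.Gamma_pos_of_pos (show (0:ℝ) < t + 1 by linarith)
  have g4 := Real.Gamma_pos_of_pos (show (0:ℝ) < 2*t + 1 by linarith)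
  have hlt : (0:ℝ) < l ^ t := Real.rpow_pos_of_pos hl t
  have hlnt : l ^ (-t) = (l ^ t)⁻¹ := Real.rpow_neg hl.le t
  rw [hlnt]
  field_simp

lemma part_two (t : ℝ) (ht : 0 < t) (l : ℝ) (hl : 0 ≤ l) :
      (∫ x in Ioi (0:ℝ), ∫ u in Ioo (0:ℝ) 1,
          Real.exp (-(l * x / u)) * (x ^ (t - 1) * Real.exp (-x) / Real.Gamma t) *
            (u ^ ((1:ℝ) / 2 - 1) * (1 - u) ^ ((1:ℝ) / 2 + t - 1) *
              (Real.Gamma (1 / 2 + (1 / 2 + t)) /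
                (Real.Gamma (1 / 2) * Real.Gamma (1 / 2 + t)))))
        = (Real.sqrt (1 + l) - Real.sqrt l) ^ (2 * t) := by
  have g1 := Real.Gamma_pos_of_pos (show (0:ℝ) < 1/2 by norm_num)
  have g2 := Real.Gamma_pos_of_pos (show (0:ℝ) < 1/2 + t by linarith)
  have g3 := Real.Gamma_pos_of_pos (show (0:ℝ) < 1/2 + (1/2 + t) by linarith)
  have gt0 := Real.Gamma_pos_of_pos ht
  set C : ℝ := Real.Gamma (1/2 + (1/2 + t)) / (Real.Gamma (1/2) * Real.Gamma (1/2 + t)) with hC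
  have hCpos : 0 < C := by positivity
  set K : ℝ → ℝ := fun u => u ^ ((1:ℝ)/2 - 1) * (1 - u) ^ ((1:ℝ)/2 + t - 1) * C with hK
  set G : ℝ → ℝ → ℝ := fun x u =>
    Real.exp (-(l * x / u)) * (x ^ (t - 1) * Real.exp (-x) / Real.Gamma t) * K u with hG
  -- pointwise rewriting of the x-section
  have hsec : ∀ u : ℝ, u ∈ Ioo (0:ℝ) 1 →
      (fun x => G x u) = fun x => (x ^ (t-1) * Real.exp (-((1 + l/u) * x))) * (K u / Real.Gamma t) := by
    intro u hu
    funext x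
    rw [hG]
    beta_reduce
    have he : Real.exp (-(l * x / u)) * Real.exp (-x) = Real.exp (-((1 + l/u) * x)) := by
      rw [← Real.exp_add]; congr 1; ring
    rw [← he]
    ring
  have hr : ∀ u : ℝ, u ∈ Ioo (0:ℝ) 1 → (0:ℝ) < 1 + l/u := by
    intro u hu
    have := hu.1
    have : 0 ≤ l/u := by positivity
    linarith
  -- integrability of x-sections
  have hbase : ∀ u : ℝ, u ∈ Ioo (0:ℝ) 1 →
      IntegrableOn (fun x : ℝ => x ^ (t-1) * Real.exp (-((1 + l/u) * x))) (Ioi 0) := by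
    intro u hu
    have h := integrableOn_rpow_mul_exp_neg_mul_rpow (p := 1) (s := t-1) (b := 1 + l/u)
      (by linarith) zero_lt_one (hr u hu)
    apply h.congr_fun ?_ measurableSet_Ioi
    intro x hx
    simp only [Real.rpow_one, neg_mul]
  have hsecint : ∀ u : ℝ, u ∈ Ioo (0:ℝ) 1 → IntegrableOn (fun x => G x u) (Ioi 0) := by
    intro u hu
    rw [hsec u hu]
    exact (hbase u hu).mul_const _
  -- value of the x-integral
  have hxval : ∀ u : ℝ, u ∈ Ioo (0:ℝ) 1 →
      (∫ x in Ioi (0:ℝ), G x u)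
        = (u ^ (t - 1/2) * (1 - u) ^ (t - 1/2) * (u + l) ^ (-t)) * C := by
    intro u hu
    have h0 : (0:ℝ) < u := hu.1
    have h1 : (0:ℝ) < 1 - u := by linarith [hu.2]
    have hul : (0:ℝ) < u + l := by linarith
    rw [hsec u hu, MeasureTheory.integral_mul_const,
      integral_rpow_mul_exp_neg_mul_Ioi ht (hr u hu)]
    have e1 : 1/(1 + l/u) = u/(u+l) := by
      field_simp
    rw [e1, Real.div_rpow h0.le hul.le, Real.rpow_neg hul.le]
    rw [hK]
    beta_reduce
    have e2 : u ^ t / (u+l) ^ t * Real.Gamma t *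
        (u ^ ((1:ℝ)/2 - 1) * (1 - u) ^ ((1:ℝ)/2 + t - 1) * C / Real.Gamma t)
        = (u ^ t * u ^ ((1:ℝ)/2 - 1)) * (1 - u) ^ ((1:ℝ)/2 + t - 1) * ((u+l) ^ t)⁻¹ * C := by
      field_simp
    rw [e2, ← Real.rpow_add h0, show t + ((1:ℝ)/2 - 1) = t - 1/2 by ring,
      show (1:ℝ)/2 + t - 1 = t - 1/2 by ring]
  -- product integrability
  have hmeas : AEStronglyMeasurable (Function.uncurry G)
      ((volume.restrict (Ioi (0:ℝ))).prod (volume.restrict (Ioo (0:ℝ) 1))) := by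
    apply Measurable.aestronglyMeasurable
    rw [hG, hK]
    fun_prop
  have hKint : IntegrableOn K (Ioo (0:ℝ) 1) := by
    rw [hK]
    exact (betaIntegrable (a := 1/2) (b := 1/2 + t) (by norm_num) (by linarith)).mul_const C
  have hGnonneg : ∀ u : ℝ, u ∈ Ioo (0:ℝ) 1 → ∀ x : ℝ, x ∈ Ioi (0:ℝ) → 0 ≤ G x u := by
    intro u hu x hx
    have h0 : (0:ℝ) < u := hu.1
    have h1 : (0:ℝ) < 1 - u := by linarith [hu.2]
    have hx0 : (0:ℝ) < x := hx
    rw [hG]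
    beta_reduce
    have : 0 ≤ K u := by rw [hK]; positivity
    positivity
  have hnormval : ∀ u : ℝ, u ∈ Ioo (0:ℝ) 1 →
      (∫ x in Ioi (0:ℝ), ‖G x u‖)
        = (u ^ (t - 1/2) * (1 - u) ^ (t - 1/2) * (u + l) ^ (-t)) * C := by
    intro u hu
    rw [← hxval u hu]
    apply setIntegral_congr_fun measurableSet_Ioi
    intro x hx
    exact Real.norm_of_nonneg (hGnonneg u hu x hx)
  have hprodint : Integrable (Function.uncurry G)
      ((volume.restrict (Ioi (0:ℝ))).prod (volume.restrict (Ioo (0:ℝ) 1))) := by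
    rw [integrable_prod_iff' hmeas]
    constructor
    · filter_upwards [self_mem_ae_restrict measurableSet_Ioo] with u hu
      exact hsecint u hu
    · have : IntegrableOn
          (fun u : ℝ => ∫ x in Ioi (0:ℝ), ‖Function.uncurry G (x, u)‖) (Ioo (0:ℝ) 1) := by
        have hm2 : AEStronglyMeasurable
            (fun u : ℝ => ∫ x in Ioi (0:ℝ), ‖Function.uncurry G (x, u)‖)
            (volume.restrict (Ioo (0:ℝ) 1)) :=
          ((AEStronglyMeasurable.norm hmeas).prod_swap).integral_prod_right'
        apply hKint.mono' hm2
        filter_upwards [self_mem_ae_restrict measurableSet_Ioo] with u hu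
        have h0 : (0:ℝ) < u := hu.1
        have h1 : (0:ℝ) < 1 - u := by linarith [hu.2]
        have hul : (0:ℝ) < u + l := by linarith
        have hval := hnormval u hu
        simp only [Function.uncurry] at hval ⊢
        rw [Real.norm_of_nonneg (by
          rw [hval]; positivity), hval]
        rw [hK]
        beta_reduce
        have h2 : (u + l) ^ (-t) ≤ u ^ (-t) :=
          Real.rpow_le_rpow_of_nonpos h0 (by linarith) (by linarith)
        calc u ^ (t - 1/2) * (1 - u) ^ (t - 1/2) * (u + l) ^ (-t) * C
            ≤ u ^ (t - 1/2) * (1 - u) ^ (t - 1/2) * u ^ (-t) * C := by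
              have : 0 ≤ u ^ (t - 1/2) * (1 - u) ^ (t - 1/2) := by positivity
              apply mul_le_mul_of_nonneg_right (mul_le_mul_of_nonneg_left h2 this) hCpos.le
          _ = u ^ ((1:ℝ)/2 - 1) * (1 - u) ^ ((1:ℝ)/2 + t - 1) * C := by
              rw [mul_right_comm (u ^ (t - 1/2)), ← Real.rpow_add h0]
              ring_nf
      exact this
  -- swap and conclude
  have hswap := MeasureTheory.integral_integral_swap (f := G) hprodint
  calc (∫ x in Ioi (0:ℝ), ∫ u in Ioo (0:ℝ) 1, G x u)
      = ∫ u in Ioo (0:ℝ) 1, ∫ x in Ioi (0:ℝ), G x u := hswap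
    _ = ∫ u in Ioo (0:ℝ) 1,
          (u ^ (t - 1/2) * (1 - u) ^ (t - 1/2) * (u + l) ^ (-t)) * C :=
        setIntegral_congr_fun measurableSet_Ioo (fun u hu => hxval u hu)
    _ = Ifun t l * C := by rw [Ifun, ← MeasureTheory.integral_mul_const]
    _ = (Real.sqrt (1 + l) - Real.sqrt l) ^ (2 * t) := by
        rw [Ifun_key ht hl, hC, show (1:ℝ)/2 + (1/2 + t) = t + 1 by ring,
          show (1:ℝ)/2 + t = t + 1/2 by ring]
        have g4 := Real.Gamma_pos_of_pos (show (0:ℝ) < t + 1/2 by linarith)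
        have g5 := Real.Gamma_pos_of_pos (show (0:ℝ) < t + 1 by linarith)
        field_simp

theorem laplace_Gamma_G_half (t : ℝ) (ht : 0 < t) :
    (∀ l : ℝ, 0 < l →
      (Real.sqrt (1 + l) - Real.sqrt l) ^ (2 * t)
        = (Real.Gamma (t + 1 / 2) * Real.Gamma (t + 1)) /
            (Real.Gamma (1 / 2) * Real.Gamma (2 * t + 1)) * l ^ (-t) *
            gaussF t (t + 1 / 2) (2 * t + 1) (-1 / l)) ∧
    (∀ l : ℝ, 0 ≤ l →
      (∫ x in Ioi (0:ℝ), ∫ u in Ioo (0:ℝ) 1,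
          Real.exp (-(l * x / u)) * (x ^ (t - 1) * Real.exp (-x) / Real.Gamma t) *
            (u ^ ((1:ℝ) / 2 - 1) * (1 - u) ^ ((1:ℝ) / 2 + t - 1) *
              (Real.Gamma (1 / 2 + (1 / 2 + t)) /
                (Real.Gamma (1 / 2) * Real.Gamma (1 / 2 + t)))))
        = (Real.sqrt (1 + l) - Real.sqrt l) ^ (2 * t)) :=
  ⟨fun l hl => part_one t ht l hl, fun l hl => part_two t ht l hl⟩
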